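/- Let r ∈ ℕ₀ and e₀,…,e_r, f₀,…,f_r ∈ ℕ₀. Set e'_i = e_i mod 2 and f'_i = f_i mod 2 for 1 ≤ i ≤ r, and e'₀ = e₀ + Σ_{i=1}^r (e_i − e'_i), f'₀ = f₀ + Σ_{i=1}^r (f_i − f'_i). Then ⟨{x²y ≈ yx², x^{e₀} ∏_{i=1}^r (t_i x^{e_i}) ≈ x^{f₀} ∏_{i=1}^r (t_i x^{f_i})}⟩ = ⟨{x²y ≈ yx², x^{e'₀} ∏_{i=1}^r (t_i x^{e'_i}) ≈ x^{f'₀} ∏_{i=1}^r (t_i x^{f'_i})}⟩; that is, within the variety A = var{x²y ≈ yx²}, the identity x^{e₀}∏_{i=1}^r(t_i x^{e_i}) ≈ x^{f₀}∏_{i=1}^r(t_i x^{f_i}) is equivalent to one in which every exponent e'_i, f'_i (1 ≤ i ≤ r) is at most 1. -/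

import Mathlib

/-! ## Words over a countably infinite alphabet -/

/-- `Word` is the free monoid `F` over the countably infinite alphabet `X = ℕ`. -/
abbrev Word : Type := FreeMonoid ℕ

/-- The letter with index `i`, as a one-letter word. -/
def ltr (i : ℕ) : Word := FreeMonoid.of i

/-- The distinguished letters `x`, `y`, `z`, `t`, `s`. -/
def wx : Word := ltr 0
def wy : Word := ltr 1
def wz : Word := ltr 2
def wt : Word := ltr 3
def ws : Word := ltr 4

/-- The letters `z_i` for `i ≥ 1` (distinct from `x,y,z,t,s` and from all `t_j`). -/
def wzi (i : ℕ) : Word := ltr (2 * i + 10)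

/-- The letters `t_i` for `i ≥ 1`. -/
def wti (i : ℕ) : Word := ltr (2 * i + 11)

/-- `pr a len f = f (a+1) * f (a+2) * ⋯ * f (a+len)`, i.e. `∏_{i=a+1}^{a+len} f i`. -/
def pr (a len : ℕ) (f : ℕ → Word) : Word :=
  ((List.range len).map (fun i => f (a + 1 + i))).prod

/-- The word `u` read from right to left. -/
def revW (u : Word) : Word := FreeMonoid.ofList (FreeMonoid.toList u).reverse

/-- `ρ : ℕ → ℕ` is (restricts to) a permutation of `{1,…,N}`. -/
def IsPermOn (ρ : ℕ → ℕ) (N : ℕ) : Prop :=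
  Set.BijOn ρ (Set.Icc 1 N) (Set.Icc 1 N)

/-- `ρ` is a `(p,q)`-permutation: a permutation of `{1,…,p+q}` such that for each
`i = 1,…,p+q-1` exactly one of `ρ i`, `ρ (i+1)` lies in `{1,…,p}`. -/
def IsPQPerm (ρ : ℕ → ℕ) (p q : ℕ) : Prop :=
  IsPermOn ρ (p + q) ∧
    ∀ i : ℕ, 1 ≤ i → i < p + q → (ρ i ∈ Set.Icc 1 p ↔ ¬ ρ (i + 1) ∈ Set.Icc 1 p)

/-- `(n,m) ∈ N̂₀²`, i.e. `|n - m| ≤ 1`. -/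
def InHatN (n m : ℕ) : Prop := n ≤ m + 1 ∧ m ≤ n + 1

/-! ## The words `a_{n,m}[ρ]`, `c_{n,m,k}[τ]`, `d_{n,m,k}[τ]` and friends -/

/-- `a_{n,m}[ρ] = (∏_{i=1}^n z_i t_i) x (∏_{i=1}^{n+m} z_{iρ}) x (∏_{i=n+1}^{n+m} t_i z_i)`. -/
def wordA (n m : ℕ) (ρ : ℕ → ℕ) : Word :=
  pr 0 n (fun i => wzi i * wti i) * wx * pr 0 (n + m) (fun i => wzi (ρ i)) * wx *
    pr n m (fun i => wti i * wzi i)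

/-- `a'_{n,m}[ρ] = (∏_{i=1}^n z_i t_i) x² (∏_{i=1}^{n+m} z_{iρ}) (∏_{i=n+1}^{n+m} t_i z_i)`. -/
def wordA' (n m : ℕ) (ρ : ℕ → ℕ) : Word :=
  pr 0 n (fun i => wzi i * wti i) * (wx * wx) * pr 0 (n + m) (fun i => wzi (ρ i)) *
    pr n m (fun i => wti i * wzi i)

/-- `â_{n,m}[ρ]`: the word `a_{n,m}[ρ]` with both occurrences of `x` deleted. -/
def hatA (n m : ℕ) (ρ : ℕ → ℕ) : Word :=
  pr 0 n (fun i => wzi i * wti i) * pr 0 (n + m) (fun i => wzi (ρ i)) *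
    pr n m (fun i => wti i * wzi i)

/-- `c_{n,m,k}[τ]`. -/
def wordC (n m k : ℕ) (τ : ℕ → ℕ) : Word :=
  pr 0 n (fun i => wzi i * wti i) * (wx * wy * wt) * pr n m (fun i => wzi i * wti i) * wx *
    pr 0 (n + m + k) (fun i => wzi (τ i)) * wy * pr (n + m) k (fun i => wti i * wzi i)

/-- `c'_{n,m,k}[τ]` (the factor `xyt` of `c_{n,m,k}[τ]` replaced by `yxt`). -/
def wordC' (n m k : ℕ) (τ : ℕ → ℕ) : Word :=
  pr 0 n (fun i => wzi i * wti i) * (wy * wx * wt) * pr n m (fun i => wzi i * wti i) * wx *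
    pr 0 (n + m + k) (fun i => wzi (τ i)) * wy * pr (n + m) k (fun i => wti i * wzi i)

/-- `d_{n,m,k}[τ]`: the word `c_{n,m,k}[τ]` read from right to left. -/
def wordD (n m k : ℕ) (τ : ℕ → ℕ) : Word := revW (wordC n m k τ)

/-- `d'_{n,m,k}[τ]`: the word `c'_{n,m,k}[τ]` read from right to left. -/
def wordD' (n m k : ℕ) (τ : ℕ → ℕ) : Word := revW (wordC' n m k τ)

/-! ## Fully invariant congruences -/

/-- `θ` is a fully invariant congruence on the free monoid `F`. -/
structure IsFIC (θ : Word → Word → Prop) : Prop where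
  refl : ∀ u, θ u u
  symm : ∀ {u v}, θ u v → θ v u
  trans : ∀ {u v w}, θ u v → θ v w → θ u w
  mul : ∀ {u₁ v₁ u₂ v₂}, θ u₁ v₁ → θ u₂ v₂ → θ (u₁ * u₂) (v₁ * v₂)
  subst : ∀ (σ : Word →* Word) {u v}, θ u v → θ (σ u) (σ v)

/-- Containment of binary relations (sets of identities). -/
def RelLe (S θ : Word → Word → Prop) : Prop := ∀ u v, S u v → θ u v

/-- `⟨S⟩`: the least fully invariant congruence containing the set `S` of identities. -/
def ficGen (S : Word → Word → Prop) : Word → Word → Prop :=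
  fun u v => ∀ θ : Word → Word → Prop, IsFIC θ → RelLe S θ → θ u v

/-- Intersection of two relations: the meet in the lattice of fully invariant congruences. -/
def RelMeet (θ₁ θ₂ : Word → Word → Prop) : Word → Word → Prop := fun u v => θ₁ u v ∧ θ₂ u v

/-- The join of two fully invariant congruences. -/
def ficJoin (θ₁ θ₂ : Word → Word → Prop) : Word → Word → Prop :=
  ficGen (fun u v => θ₁ u v ∨ θ₂ u v)

/-- The lattice of all fully invariant congruences on `F` containing `θ` is distributive
(meets in this lattice are intersections, joins are generated joins). -/
def FICLatDistrib (θ : Word → Word → Prop) : Prop :=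
  ∀ a b c : Word → Word → Prop, IsFIC a → IsFIC b → IsFIC c →
    RelLe θ a → RelLe θ b → RelLe θ c →
      ∀ u v, RelMeet a (ficJoin b c) u v ↔ ficJoin (RelMeet a b) (RelMeet a c) u v

/-- The lattice of all fully invariant congruences on `F` containing `θ` is modular. -/
def FICLatModular (θ : Word → Word → Prop) : Prop :=
  ∀ a b c : Word → Word → Prop, IsFIC a → IsFIC b → IsFIC c →
    RelLe θ a → RelLe θ b → RelLe θ c → RelLe a c →
      ∀ u v, ficJoin a (RelMeet b c) u v ↔ RelMeet (ficJoin a b) c u v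

/-! ## Satisfaction and factor monoids -/

/-- The monoid `M` satisfies the identity `u ≈ v`. -/
def MSat (M : Type) [Monoid M] (u v : Word) : Prop := ∀ f : Word →* M, f u = f v

/-- The underlying type of the factor monoid `M(w)`: all factors (contiguous subwords)
of `w` together with an extra zero element (`none`). -/
abbrev Factor (w : List ℕ) : Type := Option { u : List ℕ // u <:+: w }

namespace Factor

variable {w : List ℕ}

instance : One (Factor w) := ⟨some ⟨[], List.nil_infix⟩⟩

instance : Mul (Factor w) :=
  ⟨fun a b =>
    match a, b with
    | none, _ => none
    | some _, none => none
    | some u, some v => if h : (u.1 ++ v.1) <:+: w then some ⟨u.1 ++ v.1, h⟩ else none⟩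

theorem none_mul (a : Factor w) : (none : Factor w) * a = none := rfl

theorem mul_none (a : Factor w) : a * (none : Factor w) = none := by cases a <;> rfl

theorem some_mul_some (u v : { u : List ℕ // u <:+: w }) :
    (some u : Factor w) * some v =
      if h : (u.1 ++ v.1) <:+: w then some ⟨u.1 ++ v.1, h⟩ else none := rfl

theorem one_def : (1 : Factor w) = some ⟨[], List.nil_infix⟩ := rfl

private theorem infix_left {u v : List ℕ} (h : (u ++ v) <:+: w) : u <:+: w :=
  (List.prefix_append u v).isInfix.trans h

private theorem infix_right {u v : List ℕ} (h : (u ++ v) <:+: w) : v <:+: w :=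
  (List.suffix_append u v).isInfix.trans h

instance : Monoid (Factor w) where
  mul_assoc a b c := by
    rcases a with _ | u
    · simp [none_mul]
    rcases b with _ | v
    · rw [mul_none, none_mul, mul_none]
    rcases c with _ | t
    · rw [mul_none, mul_none, mul_none]
    by_cases h : (u.1 ++ (v.1 ++ t.1)) <:+: w
    · have h' : ((u.1 ++ v.1) ++ t.1) <:+: w := by rwa [List.append_assoc]
      have huv : (u.1 ++ v.1) <:+: w := by
        refine infix_left (v := t.1) ?_; rwa [List.append_assoc]
      have hvt : (v.1 ++ t.1) <:+: w := infix_right h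
      rw [some_mul_some u v, dif_pos huv, some_mul_some v t, dif_pos hvt,
        some_mul_some, dif_pos h', some_mul_some, dif_pos h]
      exact congrArg some (Subtype.ext (List.append_assoc _ _ _))
    · have h' : ¬ ((u.1 ++ v.1) ++ t.1) <:+: w := by rwa [List.append_assoc]
      rw [some_mul_some u v, some_mul_some v t]
      by_cases huv : (u.1 ++ v.1) <:+: w
      · rw [dif_pos huv]
        by_cases hvt : (v.1 ++ t.1) <:+: w
        · rw [dif_pos hvt, some_mul_some, dif_neg h', some_mul_some, dif_neg h]
        · rw [dif_neg hvt, some_mul_some, dif_neg h', mul_none]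
      · rw [dif_neg huv, none_mul]
        by_cases hvt : (v.1 ++ t.1) <:+: w
        · rw [dif_pos hvt, some_mul_some, dif_neg h]
        · rw [dif_neg hvt, mul_none]
  one_mul a := by
    rcases a with _ | u
    · rw [mul_none]
    · rw [one_def, some_mul_some, dif_pos (by simpa using u.2)]
      exact congrArg some (Subtype.ext (List.nil_append _))
  mul_one a := by
    rcases a with _ | u
    · rw [none_mul]
    · rw [one_def, some_mul_some, dif_pos (by simpa using u.2)]
      exact congrArg some (Subtype.ext (List.append_nil _))

end Factor

/-- `Th(M(w))`: the set of identities holding in the factor monoid `M(w)`. -/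
def ThFM (w : List ℕ) : Word → Word → Prop :=
  fun u v => ∀ f : Word →* Factor w, f u = f v

/-! ## Distinguished identities and sets of identities -/

/-- The identity `α : xzytxy ≈ xzytyx` (as a pair of words). -/
def idAlphaL : Word := wx * wz * wy * wt * wx * wy
def idAlphaR : Word := wx * wz * wy * wt * wy * wx

/-- The identity `β : xzxyty ≈ xzyxty`. -/
def idBetaL : Word := wx * wz * wx * wy * wt * wy
def idBetaR : Word := wx * wz * wy * wx * wt * wy

/-- The set of identities defining the variety `N`:
`{x² ≈ x³, x²y ≈ yx², xyxzx ≈ x²yz, α, β}`. -/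
def SigmaN : Word → Word → Prop := fun u v =>
  (u = wx ^ 2 ∧ v = wx ^ 3) ∨
  (u = wx ^ 2 * wy ∧ v = wy * wx ^ 2) ∨
  (u = wx * wy * wx * wz * wx ∧ v = wx ^ 2 * wy * wz) ∨
  (u = idAlphaL ∧ v = idAlphaR) ∨
  (u = idBetaL ∧ v = idBetaR)

/-- `θ_N = ⟨Σ_N⟩`: the fully invariant congruence of the variety `N`. -/
def thetaN : Word → Word → Prop := ficGen SigmaN

/-- The set `Σ_P(n)` of identities defining the variety `P_n`. -/
def SigmaP (n : ℕ) : Word → Word → Prop := fun u v =>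
  (u = wx ^ n ∧ v = wx ^ (n + 1)) ∨
  (u = wx ^ 2 * wy ∧ v = wy * wx ^ 2) ∨
  (∃ (k l : ℕ) (ρ : ℕ → ℕ), IsPermOn ρ (k + l) ∧ u = wordA k l ρ ∧ v = wordA' k l ρ) ∨
  (∃ (k l m : ℕ) (τ : ℕ → ℕ), IsPermOn τ (k + l + m) ∧ u = wordC k l m τ ∧ v = wordC' k l m τ) ∨
  (∃ (k l m : ℕ) (τ : ℕ → ℕ), IsPermOn τ (k + l + m) ∧ u = wordD k l m τ ∧ v = wordD' k l m τ)

/-- The set `Σ_Q(n) = {x^n ≈ x^{n+1}, x^n y ≈ y x^n, x²y ≈ xyx}`. -/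
def SigmaQ (n : ℕ) : Word → Word → Prop := fun u v =>
  (u = wx ^ n ∧ v = wx ^ (n + 1)) ∨
  (u = wx ^ n * wy ∧ v = wy * wx ^ n) ∨
  (u = wx ^ 2 * wy ∧ v = wx * wy * wx)

/-- The set `Σ_R(n) = {x^n ≈ x^{n+1}, x²y ≈ yx², α, β}`. -/
def SigmaR (n : ℕ) : Word → Word → Prop := fun u v =>
  (u = wx ^ n ∧ v = wx ^ (n + 1)) ∨
  (u = wx ^ 2 * wy ∧ v = wy * wx ^ 2) ∨
  (u = idAlphaL ∧ v = idAlphaR) ∨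
  (u = idBetaL ∧ v = idBetaR)

/-- `Σ^δ`: the set of reversed identities (both sides read from right to left). -/
def SigmaDual (S : Word → Word → Prop) : Word → Word → Prop :=
  fun u v => ∃ a b, S a b ∧ u = revW a ∧ v = revW b

/-- Left-hand side of the identity `δ_{n,m}`: `x^m t₁ x t₂ x ⋯ t_n x`. -/
def deltaL (n m : ℕ) : Word := wx ^ m * ((List.range n).map (fun i => wti (i + 1) * wx)).prod

/-- Right-hand side of the identity `δ_{n,m}`: `x^{m+n} t₁ t₂ ⋯ t_n`. -/
def deltaR (n m : ℕ) : Word := wx ^ (m + n) * ((List.range n).map (fun i => wti (i + 1))).prod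

/-- The word `x^{e₀} ∏_{i=1}^r (t_i x^{e_i})`. -/
def wordE (r : ℕ) (e : ℕ → ℕ) : Word :=
  wx ^ (e 0) * ((List.range r).map (fun i => wti (i + 1) * wx ^ (e (i + 1)))).prod

/-- The word `x^{e₀} y^{f₀} ∏_{i=1}^r (t_i x^{e_i} y^{f_i})`. -/
def wordEF (r : ℕ) (e f : ℕ → ℕ) : Word :=
  wx ^ (e 0) * wy ^ (f 0) *
    ((List.range r).map (fun i => wti (i + 1) * wx ^ (e (i + 1)) * wy ^ (f (i + 1)))).prod

/-- The word `y^{f₀} x^{e₀} ∏_{i=1}^r (t_i x^{e_i} y^{f_i})`. -/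
def wordEF' (r : ℕ) (e f : ℕ → ℕ) : Word :=
  wy ^ (f 0) * wx ^ (e 0) *
    ((List.range r).map (fun i => wti (i + 1) * wx ^ (e (i + 1)) * wy ^ (f (i + 1)))).prod

/-! ## Aperiodicity and central idempotents -/

/-- The subset `S` of `M` is a subsemigroup which is a group under the induced
multiplication. -/
def IsGroupSubsemigroup {M : Type} [Monoid M] (S : Set M) : Prop :=
  (∀ a ∈ S, ∀ b ∈ S, a * b ∈ S) ∧
    ∃ e ∈ S, (∀ a ∈ S, e * a = a ∧ a * e = a) ∧ ∀ a ∈ S, ∃ b ∈ S, a * b = e ∧ b * a = e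

/-- `M` is aperiodic: every subsemigroup of `M` which is a group under the induced
multiplication is a singleton. -/
def Aperiodic (M : Type) [Monoid M] : Prop :=
  ∀ S : Set M, IsGroupSubsemigroup S → ∃ a, S = {a}

/-- `M` has central idempotents. -/
def CentralIdempotents (M : Type) [Monoid M] : Prop :=
  ∀ e : M, e * e = e → ∀ a : M, e * a = a * e


section Aux11

/-- The tail product `∏_{i=1}^r (t_i x^{e_i})`. -/
def tailP (e : ℕ → ℕ) (r : ℕ) : Word :=
  ((List.range r).map (fun i => wti (i + 1) * wx ^ (e (i + 1)))).prod

lemma comm_sq {θ : Word → Word → Prop} (hθ : IsFIC θ)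
    (h : θ (wx ^ 2 * wy) (wy * wx ^ 2)) (w : Word) : θ (wx ^ 2 * w) (w * wx ^ 2) := by
  have := hθ.subst (FreeMonoid.lift (fun n => if n = 1 then w else FreeMonoid.of n)) h
  simpa [wx, wy, ltr, map_mul, map_pow] using this

lemma comm_even {θ : Word → Word → Prop} (hθ : IsFIC θ)
    (h : θ (wx ^ 2 * wy) (wy * wx ^ 2)) (w : Word) (k : ℕ) :
    θ (wx ^ (2 * k) * w) (w * wx ^ (2 * k)) := by
  induction k with
  | zero => simpa using hθ.refl w
  | succ k ih =>
    have h1 : θ (wx ^ 2 * (wx ^ (2 * k) * w)) (wx ^ 2 * (w * wx ^ (2 * k))) :=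
      hθ.mul (hθ.refl _) ih
    have h2 : θ (wx ^ 2 * w * wx ^ (2 * k)) (w * wx ^ 2 * wx ^ (2 * k)) :=
      hθ.mul (comm_sq hθ h w) (hθ.refl _)
    have h3 : θ (wx ^ 2 * (wx ^ (2 * k) * w)) (w * (wx ^ 2 * wx ^ (2 * k))) := by
      refine hθ.trans h1 ?_
      simpa [mul_assoc] using h2
    have e1 : wx ^ (2 * (k + 1)) * w = wx ^ 2 * (wx ^ (2 * k) * w) := by
      rw [← mul_assoc, ← pow_add]; ring_nf
    have e2 : w * wx ^ (2 * (k + 1)) = w * (wx ^ 2 * wx ^ (2 * k)) := by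
      rw [← pow_add]; ring_nf
    rw [e1, e2]; exact h3

lemma main_lemma {θ : Word → Word → Prop} (hθ : IsFIC θ)
    (h : θ (wx ^ 2 * wy) (wy * wx ^ 2)) (e : ℕ → ℕ) (r : ℕ) :
    ∀ a : ℕ, θ (wx ^ a * tailP e r)
      (wx ^ (a + ∑ j ∈ Finset.range r, (e (j + 1) - e (j + 1) % 2)) *
        tailP (fun i => e i % 2) r) := by
  induction r with
  | zero => intro a; simpa [tailP] using hθ.refl _
  | succ r ih =>
    intro a
    set q := e (r + 1) / 2 with hq
    set s := e (r + 1) % 2 with hs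
    have hes : e (r + 1) = 2 * q + s := (Nat.div_add_mod _ 2).symm
    have hsub : e (r + 1) - s = 2 * q := by omega
    have step1 : θ (wx ^ a * tailP e r * wti (r + 1) * wx ^ (2 * q))
        (wx ^ (2 * q) * (wx ^ a * tailP e r * wti (r + 1))) :=
      hθ.symm (comm_even hθ h _ q)
    have step1' : θ (wx ^ a * tailP e r * wti (r + 1) * wx ^ (2 * q) * wx ^ s)
        (wx ^ (2 * q) * (wx ^ a * tailP e r * wti (r + 1)) * wx ^ s) :=
      hθ.mul step1 (hθ.refl _)
    have step2 : θ (wx ^ (2 * q + a) * tailP e r)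
        (wx ^ (2 * q + a + ∑ j ∈ Finset.range r, (e (j + 1) - e (j + 1) % 2)) *
          tailP (fun i => e i % 2) r) := ih _
    have step2' := hθ.mul step2 (hθ.refl (wti (r + 1) * wx ^ s))
    refine hθ.trans ?_ (hθ.trans step1' ?_)
    · have heq : wx ^ a * tailP e (r + 1) =
          wx ^ a * tailP e r * wti (r + 1) * wx ^ (2 * q) * wx ^ s := by
        simp [tailP, List.range_succ, hes, pow_add, mul_assoc]
      rw [heq]; exact hθ.refl _
    · have eL : wx ^ (2 * q) * (wx ^ a * tailP e r * wti (r + 1)) * wx ^ s =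
          wx ^ (2 * q + a) * tailP e r * (wti (r + 1) * wx ^ s) := by
        simp [pow_add, mul_assoc]
      have eR : wx ^ (2 * q + a + ∑ j ∈ Finset.range r, (e (j + 1) - e (j + 1) % 2)) *
            tailP (fun i => e i % 2) r * (wti (r + 1) * wx ^ s) =
          wx ^ (a + ∑ j ∈ Finset.range (r + 1), (e (j + 1) - e (j + 1) % 2)) *
            tailP (fun i => e i % 2) (r + 1) := by
        simp [tailP, List.range_succ, Finset.sum_range_succ, hsub, mul_assoc]
        congr 1
        congr 1
        omega
      rw [eL, ← eR]; exact step2'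

lemma wordE_cong {θ : Word → Word → Prop} (hθ : IsFIC θ)
    (h : θ (wx ^ 2 * wy) (wy * wx ^ 2)) (e : ℕ → ℕ) (r : ℕ) :
    θ (wordE r e)
      (wordE r (fun i => if i = 0 then
        e 0 + ∑ j ∈ Finset.range r, (e (j + 1) - e (j + 1) % 2) else e i % 2)) := by
  have key := main_lemma hθ h e r (e 0)
  have e1 : wordE r e = wx ^ (e 0) * tailP e r := rfl
  have e2 : wordE r (fun i => if i = 0 then
        e 0 + ∑ j ∈ Finset.range r, (e (j + 1) - e (j + 1) % 2) else e i % 2) =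
      wx ^ (e 0 + ∑ j ∈ Finset.range r, (e (j + 1) - e (j + 1) % 2)) *
        tailP (fun i => e i % 2) r := by
    simp [wordE, tailP]
  rw [e1, e2]; exact key

end Aux11

/-- Within `A = var{x²y ≈ yx²}`, the identity
`x^{e₀}∏(t_i x^{e_i}) ≈ x^{f₀}∏(t_i x^{f_i})` is equivalent to the identity obtained by
replacing each exponent `e_i`, `f_i` (`1 ≤ i ≤ r`) by its residue mod 2 and transferring
the removed even powers to the initial exponent. -/
theorem statement_11 (r : ℕ) (e f : ℕ → ℕ) :
    ∀ u v : Word,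
      ficGen (fun a b => (a = wx ^ 2 * wy ∧ b = wy * wx ^ 2) ∨
        (a = wordE r e ∧ b = wordE r f)) u v ↔
      ficGen (fun a b => (a = wx ^ 2 * wy ∧ b = wy * wx ^ 2) ∨
        (a = wordE r (fun i => if i = 0 then
              e 0 + ∑ j ∈ Finset.range r, (e (j + 1) - e (j + 1) % 2) else e i % 2) ∧
         b = wordE r (fun i => if i = 0 then
              f 0 + ∑ j ∈ Finset.range r, (f (j + 1) - f (j + 1) % 2) else f i % 2))) u v := by
  intro u v
  constructor
  · intro hu θ hθ hT
    apply hu θ hθ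
    intro a b hab
    rcases hab with ⟨ha, hb⟩ | ⟨ha, hb⟩
    · exact hT _ _ (Or.inl ⟨ha, hb⟩)
    · subst ha; subst hb
      have h2 : θ (wx ^ 2 * wy) (wy * wx ^ 2) := hT _ _ (Or.inl ⟨rfl, rfl⟩)
      have he := wordE_cong hθ h2 e r
      have hf := wordE_cong hθ h2 f r
      have hmid := hT _ _ (Or.inr ⟨rfl, rfl⟩)
      exact hθ.trans he (hθ.trans hmid (hθ.symm hf))
  · intro hu θ hθ hS
    apply hu θ hθ
    intro a b hab
    rcases hab with ⟨ha, hb⟩ | ⟨ha, hb⟩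
    · exact hS _ _ (Or.inl ⟨ha, hb⟩)
    · subst ha; subst hb
      have h2 : θ (wx ^ 2 * wy) (wy * wx ^ 2) := hS _ _ (Or.inl ⟨rfl, rfl⟩)
      have he := wordE_cong hθ h2 e r
      have hf := wordE_cong hθ h2 f r
      have hmid := hS _ _ (Or.inr ⟨rfl, rfl⟩)
      exact hθ.trans (hθ.symm he) (hθ.trans hmid hf)
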